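/- Let W(0) be a random variable taking values in a countable subset of ℝ^D, independent of the sequence (X_k)_{k≥1}, and set W(n) = W(0) + S(n) for n ≥ 1. Let λ, Λ ∈ C̄ with Λ − λ ∈ S, let i ≥ 0, and assume ℙ({W(i) = λ} ∩ {W(n) ∈ C̄ for all n ≥ 0}) > 0. Then the conditional probability ℙ(W(i+1) = Λ | W(i) = λ and W(n) ∈ C̄ for all n ≥ 0) equals ν({Λ − λ}) · h(Λ)/h(λ), where h(μ) = ℙ(μ + S(k) ∈ C̄ for all k ≥ 1). -/

import Mathlib

open MeasureTheory ProbabilityTheory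
open Filter Set Topology ENNReal


set_option linter.unusedSectionVars false
set_option linter.unusedVariables false
set_option maxHeartbeats 1000000

namespace Stmt4Proof

variable {α : Type*} [MeasurableSpace α] [MeasurableSingletonClass α] [AddCommMonoid α]
  {Ω : Type*} [MeasurableSpace Ω] {P : Measure Ω} [IsProbabilityMeasure P]
  {X : ℕ → Ω → α} {ν : Measure α}

/-! ### Product formulas for atoms -/

lemma prodAtom (hXmeas : ∀ k, Measurable (X k))
    (hXindep : iIndepFun X P)
    (hXdist : ∀ k, Measure.map (X k) P = ν)
    (s : Finset ℕ) (v : ℕ → α) :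
    P (⋂ k ∈ s, X k ⁻¹' {v k}) = ∏ k ∈ s, ν {v k} := by
  rw [hXindep.measure_inter_preimage_eq_mul s (fun k _ => measurableSet_singleton (v k))]
  refine Finset.prod_congr rfl fun k _ => ?_
  rw [← hXdist k, Measure.map_apply (hXmeas k) (measurableSet_singleton _)]

lemma prodAtomW0 (hXmeas : ∀ k, Measurable (X k))
    (hXindep : iIndepFun X P)
    (hXdist : ∀ k, Measure.map (X k) P = ν)
    {W0 : Ω → α} (hW0indep : IndepFun W0 (fun ω k => X k ω) P)
    (Bs : Set α) (hB : MeasurableSet Bs) (s : Finset ℕ) (v : ℕ → α) :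
    P (W0 ⁻¹' Bs ∩ ⋂ k ∈ s, X k ⁻¹' {v k}) = P (W0 ⁻¹' Bs) * ∏ k ∈ s, ν {v k} := by
  have h1 : (⋂ k ∈ s, X k ⁻¹' {v k})
      = (fun ω (k : ℕ) => X k ω) ⁻¹' (⋂ k ∈ s, (fun f : ℕ → α => f k) ⁻¹' {v k}) := by
    ext ω; simp
  have h2 : MeasurableSet (⋂ k ∈ s, (fun f : ℕ → α => f k) ⁻¹' {v k}) :=
    MeasurableSet.biInter s.countable_toSet
      (fun k _ => (measurable_pi_apply k) (measurableSet_singleton _))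
  rw [h1, hW0indep.measure_inter_preimage_eq_mul _ _ hB h2, ← h1,
    prodAtom hXmeas hXindep hXdist]

/-- atom on window `[j, j+M)` with relative values `v`. -/
def At (X : ℕ → Ω → α) (j M : ℕ) (v : ℕ → α) : Set Ω := {ω | ∀ k < M, X (j + k) ω = v k}

lemma At_eq (j M : ℕ) (v : ℕ → α) :
    At X j M v = ⋂ k ∈ Finset.Ico j (j + M), X k ⁻¹' {v (k - j)} := by
  ext ω
  simp only [At, Set.mem_setOf_eq, Set.mem_iInter, Finset.mem_Ico, Set.mem_preimage,
    Set.mem_singleton_iff]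
  constructor
  · rintro h k ⟨h1, h2⟩
    have := h (k - j) (by omega)
    rwa [Nat.add_sub_cancel' h1] at this
  · intro h k hk
    have := h (j + k) ⟨by omega, by omega⟩
    simpa [Nat.add_sub_cancel_left] using this

lemma At_meas' (hXmeas : ∀ k, Measurable (X k)) (j M : ℕ) (v : ℕ → α) :
    MeasurableSet (At X j M v) := by
  have : At X j M v = ⋂ k, ⋂ _ : k < M, (X (j + k)) ⁻¹' {v k} := by
    ext ω; simp [At]
  rw [this]
  exact MeasurableSet.iInter fun k => MeasurableSet.iInter fun _ =>
    (hXmeas (j + k)) (measurableSet_singleton _)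

lemma At_prob (hXmeas : ∀ k, Measurable (X k))
    (hXindep : iIndepFun X P)
    (hXdist : ∀ k, Measure.map (X k) P = ν) (j M : ℕ) (v : ℕ → α) :
    P (At X j M v) = ∏ k ∈ Finset.range M, ν {v k} := by
  rw [At_eq, prodAtom hXmeas hXindep hXdist, Finset.prod_Ico_eq_prod_range]
  simp [Nat.add_sub_cancel_left]

/-! ### Pinned vectors and tail events -/

/-- set of `ℕ → α` functions `S`-valued on `[0,M)`, pinned to `0` elsewhere. -/
def Pinned (S : Finset α) (M : ℕ) : Set (ℕ → α) :=
  {v | (∀ k < M, v k ∈ (S : Set α)) ∧ ∀ k, ¬ k < M → v k = 0}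

lemma Pinned_finite (S : Finset α) (M : ℕ) : (Pinned S M).Finite := by
  apply Set.Finite.of_finite_image (f := fun (v : ℕ → α) (k : Fin M) => v k.val)
  · apply (Set.Finite.pi (fun _ : Fin M => S.finite_toSet)).subset
    rintro _ ⟨v, hv, rfl⟩
    intro k _
    exact hv.1 k k.isLt
  · intro v hv w hw hvw
    funext k
    by_cases hk : k < M
    · exact congrFun hvw ⟨k, hk⟩
    · rw [hv.2 k hk, hw.2 k hk]

/-- good finite tail event -/
def mT (X : ℕ → Ω → α) (S : Finset α) (C : Set α) (j M : ℕ) (μ : α) : Set Ω :=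
  {ω | (∀ k < M, X (j + k) ω ∈ (S : Set α)) ∧
    ∀ m, 1 ≤ m → m ≤ M → μ + ∑ k ∈ Finset.range m, X (j + k) ω ∈ C}

/-- vector version of the conditions -/
def VV (S : Finset α) (C : Set α) (M : ℕ) (μ : α) : Set (ℕ → α) :=
  {v | v ∈ Pinned S M ∧ ∀ m, 1 ≤ m → m ≤ M → μ + ∑ k ∈ Finset.range m, v k ∈ C}

lemma VV_countable (S : Finset α) (C : Set α) (M : ℕ) (μ : α) : (VV S C M μ).Countable :=
  ((Pinned_finite S M).subset (fun v hv => hv.1)).countable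

lemma VV_pairwise (S : Finset α) (C : Set α) (M : ℕ) (μ : α) (j : ℕ) :
    (VV S C M μ).PairwiseDisjoint (At X j M) := by
  intro v hv w hw hne
  obtain ⟨k, hk⟩ := Function.ne_iff.1 hne
  by_cases hkM : k < M
  · exact Set.disjoint_left.2 fun ω h1 h2 => hk ((h1 k hkM).symm.trans (h2 k hkM))
  · exact absurd ((hv.1.2 k hkM).trans (hw.1.2 k hkM).symm) hk

lemma mT_eq_biUnion (S : Finset α) (C : Set α) (j M : ℕ) (μ : α) :
    mT X S C j M μ = ⋃ v ∈ VV S C M μ, At X j M v := by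
  ext ω
  simp only [mT, Set.mem_setOf_eq, Set.mem_iUnion, At, VV, Pinned]
  constructor
  · rintro ⟨h1, h2⟩
    refine ⟨fun k => if k < M then X (j + k) ω else 0, ⟨⟨?_, ?_⟩, ?_⟩, ?_⟩
    · intro k hk; simp only [if_pos hk]; exact h1 k hk
    · intro k hk; simp only [if_neg hk]
    · intro m hm1 hmM
      have : ∑ k ∈ Finset.range m, (if k < M then X (j + k) ω else 0)
          = ∑ k ∈ Finset.range m, X (j + k) ω :=
        Finset.sum_congr rfl fun k hk => if_pos (lt_of_lt_of_le (Finset.mem_range.1 hk) hmM)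
      rw [this]; exact h2 m hm1 hmM
    · intro k hk; simp only [if_pos hk]
  · rintro ⟨v, ⟨⟨hvS, hv0⟩, hvC⟩, hat⟩
    constructor
    · intro k hk; rw [hat k hk]; exact hvS k hk
    · intro m hm1 hmM
      have : ∑ k ∈ Finset.range m, X (j + k) ω = ∑ k ∈ Finset.range m, v k :=
        Finset.sum_congr rfl fun k hk => hat k (lt_of_lt_of_le (Finset.mem_range.1 hk) hmM)
      rw [this]; exact hvC m hm1 hmM

lemma mT_meas (hXmeas : ∀ k, Measurable (X k)) (S : Finset α) (C : Set α) (j M : ℕ) (μ : α) :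
    MeasurableSet (mT X S C j M μ) := by
  rw [mT_eq_biUnion]
  exact MeasurableSet.biUnion (VV_countable S C M μ) fun v _ => At_meas' hXmeas j M v

lemma mT_prob (hXmeas : ∀ k, Measurable (X k))
    (hXindep : iIndepFun X P)
    (hXdist : ∀ k, Measure.map (X k) P = ν)
    (S : Finset α) (C : Set α) (j M : ℕ) (μ : α) :
    P (mT X S C j M μ) = ∑' v : VV S C M μ, ∏ k ∈ Finset.range M, ν {v.1 k} := by
  rw [mT_eq_biUnion, measure_biUnion (VV_countable S C M μ) (VV_pairwise S C M μ j)
    (fun v _ => At_meas' hXmeas j M v)]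
  exact tsum_congr fun v => At_prob hXmeas hXindep hXdist j M v.1

lemma mT_antitone (S : Finset α) (C : Set α) (j : ℕ) (μ : α) :
    Antitone (fun M => mT X S C j M μ) := by
  intro M N hMN ω hω
  exact ⟨fun k hk => hω.1 k (lt_of_lt_of_le hk hMN),
    fun m h1 h2 => hω.2 m h1 (le_trans h2 hMN)⟩

/-- good infinite tail event -/
def mTi (X : ℕ → Ω → α) (S : Finset α) (C : Set α) (j : ℕ) (μ : α) : Set Ω :=
  {ω | (∀ k, X (j + k) ω ∈ (S : Set α)) ∧
    ∀ m, 1 ≤ m → μ + ∑ k ∈ Finset.range m, X (j + k) ω ∈ C}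

lemma mTi_eq_iInter (S : Finset α) (C : Set α) (j : ℕ) (μ : α) :
    mTi X S C j μ = ⋂ M, mT X S C j M μ := by
  ext ω
  simp only [mTi, mT, Set.mem_setOf_eq, Set.mem_iInter]
  constructor
  · rintro ⟨h1, h2⟩ M
    exact ⟨fun k _ => h1 k, fun m hm _ => h2 m hm⟩
  · intro h
    exact ⟨fun k => (h (k + 1)).1 k (by omega), fun m hm => (h m).2 m hm le_rfl⟩

lemma tendsto_mT (hXmeas : ∀ k, Measurable (X k)) (S : Finset α) (C : Set α) (j : ℕ) (μ : α) :
    Tendsto (fun M => P (mT X S C j M μ)) atTop (𝓝 (P (mTi X S C j μ))) := by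
  rw [mTi_eq_iInter]
  exact tendsto_measure_iInter_atTop
    (fun M => (mT_meas hXmeas S C j M μ).nullMeasurableSet)
    (mT_antitone S C j μ) ⟨0, measure_ne_top _ _⟩

/-- shift invariance -/
lemma mTi_shift (hXmeas : ∀ k, Measurable (X k))
    (hXindep : iIndepFun X P)
    (hXdist : ∀ k, Measure.map (X k) P = ν)
    (S : Finset α) (C : Set α) (j j' : ℕ) (μ : α) :
    P (mTi X S C j μ) = P (mTi X S C j' μ) := by
  have h1 := tendsto_mT (P := P) hXmeas S C j μ
  have h2 := tendsto_mT (P := P) hXmeas S C j' μ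
  have he : (fun M => P (mT X S C j M μ)) = fun M => P (mT X S C j' M μ) := by
    funext M
    rw [mT_prob hXmeas hXindep hXdist, mT_prob hXmeas hXindep hXdist]
  rw [he] at h1
  exact tendsto_nhds_unique h1 h2

/-! ### The initial-segment event -/

def UU (W0 : Ω → α) (S : Finset α) (C : Set α) (i : ℕ) (lam : α) : Set (α × (ℕ → α)) :=
  {p | p.1 ∈ Set.range W0 ∧ p.2 ∈ Pinned S i ∧ p.1 + ∑ k ∈ Finset.range i, p.2 k = lam ∧
       ∀ n ≤ i, p.1 + ∑ k ∈ Finset.range n, p.2 k ∈ C}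

def Fm (X : ℕ → Ω → α) (W0 : Ω → α) (S : Finset α) (C : Set α) (i : ℕ) (lam : α) : Set Ω :=
  ⋃ p ∈ UU W0 S C i lam, (W0 ⁻¹' {p.1} ∩ At X 0 i p.2)

lemma UU_countable {W0 : Ω → α} (hW0count : (Set.range W0).Countable)
    (S : Finset α) (C : Set α) (i : ℕ) (lam : α) : (UU W0 S C i lam).Countable := by
  refine (hW0count.prod (Pinned_finite S i).countable).mono ?_
  rintro ⟨w, v⟩ hp
  exact ⟨hp.1, hp.2.1⟩

lemma UU_pairwise (W0 : Ω → α) (S : Finset α) (C : Set α) (i : ℕ) (lam : α) :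
    (UU W0 S C i lam).PairwiseDisjoint (fun p => W0 ⁻¹' {p.1} ∩ At X 0 i p.2) := by
  intro p hp q hq hne
  by_cases h1 : p.1 = q.1
  · have h2 : p.2 ≠ q.2 := fun h => hne (Prod.ext h1 h)
    obtain ⟨k, hk⟩ := Function.ne_iff.1 h2
    by_cases hki : k < i
    · exact (Set.disjoint_left.2 fun ω hv hw =>
        hk ((hv.2 k hki).symm.trans (hw.2 k hki)))
    · exact absurd ((hp.2.1.2 k hki).trans (hq.2.1.2 k hki).symm) hk
  · exact Set.disjoint_left.2 fun ω hv hw => h1 (hv.1.symm.trans hw.1)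

lemma Fm_eq (W0 : Ω → α) (S : Finset α) (C : Set α) (i : ℕ) (lam : α) :
    Fm X W0 S C i lam
      = ({ω | W0 ω + ∑ k ∈ Finset.range i, X k ω = lam}
          ∩ {ω | ∀ n ≤ i, W0 ω + ∑ k ∈ Finset.range n, X k ω ∈ C})
        ∩ {ω | ∀ k < i, X k ω ∈ (S : Set α)} := by
  ext ω
  simp only [Fm, UU, At, Pinned, Set.mem_iUnion, Set.mem_inter_iff, Set.mem_preimage,
    Set.mem_singleton_iff, Set.mem_setOf_eq, exists_prop]
  constructor
  · rintro ⟨⟨w, v⟩, ⟨hw, ⟨hvS, hv0⟩, hsum, hC⟩, hW, hAt⟩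
    simp only at hW hAt hsum hC hvS
    have hs : ∀ n ≤ i, ∑ k ∈ Finset.range n, X k ω = ∑ k ∈ Finset.range n, v k := by
      intro n hn
      refine Finset.sum_congr rfl fun k hk => ?_
      have := hAt k (lt_of_lt_of_le (Finset.mem_range.1 hk) hn)
      simpa using this
    refine ⟨⟨?_, ?_⟩, ?_⟩
    · rw [hW, hs i le_rfl]; exact hsum
    · intro n hn; rw [hW, hs n hn]; exact hC n hn
    · intro k hk
      have := hAt k hk
      simp only [Nat.zero_add] at this
      rw [this]; exact hvS k hk
  · rintro ⟨⟨hsum, hC⟩, hS⟩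
    refine ⟨(W0 ω, fun k => if k < i then X k ω else 0), ⟨⟨ω, rfl⟩, ⟨?_, ?_⟩, ?_, ?_⟩, rfl, ?_⟩
    · intro k hk; simp only [if_pos hk]; exact hS k hk
    · intro k hk; simp only [if_neg hk]
    · simpa [Finset.sum_congr rfl fun k hk => if_pos (Finset.mem_range.1 hk)] using hsum
    · intro n hn
      have : ∑ k ∈ Finset.range n, (if k < i then X k ω else 0)
          = ∑ k ∈ Finset.range n, X k ω :=
        Finset.sum_congr rfl fun k hk =>
          if_pos (lt_of_lt_of_le (Finset.mem_range.1 hk) hn)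
      rw [this]; exact hC n hn
    · intro k hk; simp [if_pos hk]

lemma Fm_meas (hXmeas : ∀ k, Measurable (X k)) {W0 : Ω → α} (hW0meas : Measurable W0)
    (hW0count : (Set.range W0).Countable) (S : Finset α) (C : Set α) (i : ℕ) (lam : α) :
    MeasurableSet (Fm X W0 S C i lam) :=
  MeasurableSet.biUnion (UU_countable hW0count S C i lam) fun p _ =>
    (hW0meas (measurableSet_singleton _)).inter (At_meas' hXmeas 0 i p.2)

lemma Fm_prob_atom (hXmeas : ∀ k, Measurable (X k))
    (hXindep : iIndepFun X P)
    (hXdist : ∀ k, Measure.map (X k) P = ν)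
    {W0 : Ω → α} (hW0meas : Measurable W0) (hW0count : (Set.range W0).Countable)
    (hW0indep : IndepFun W0 (fun ω k => X k ω) P)
    (S : Finset α) (C : Set α) (i : ℕ) (lam : α) (M : ℕ) (v : ℕ → α) :
    P (Fm X W0 S C i lam ∩ At X i M v)
      = P (Fm X W0 S C i lam) * ∏ k ∈ Finset.range M, ν {v k} := by
  have hAt0 : ∀ u : ℕ → α, At X 0 i u = ⋂ k ∈ Finset.range i, X k ⁻¹' {u k} := by
    intro u; ext ω
    simp only [At, Set.mem_setOf_eq, Set.mem_iInter, Finset.mem_range, Set.mem_preimage,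
      Set.mem_singleton_iff]
    constructor
    · intro h k hk; simpa using h k hk
    · intro h k hk; simpa using h k hk
  have key : ∀ p ∈ UU W0 S C i lam,
      P ((W0 ⁻¹' {p.1} ∩ At X 0 i p.2) ∩ At X i M v)
        = P (W0 ⁻¹' {p.1} ∩ At X 0 i p.2) * ∏ k ∈ Finset.range M, ν {v k} := by
    rintro ⟨w, u⟩ hp
    simp only
    have hmerge : At X 0 i u ∩ At X i M v
        = ⋂ k ∈ Finset.range (i + M), X k ⁻¹' {(fun k => if k < i then u k else v (k - i)) k} := by
      ext ω
      simp only [At, Set.mem_inter_iff, Set.mem_setOf_eq, Set.mem_iInter, Finset.mem_range,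
        Set.mem_preimage, Set.mem_singleton_iff]
      constructor
      · rintro ⟨h1, h2⟩ k hk
        by_cases hki : k < i
        · rw [if_pos hki]; simpa using h1 k hki
        · rw [if_neg hki]
          have := h2 (k - i) (by omega)
          rwa [Nat.add_sub_cancel' (by omega)] at this
      · intro h
        constructor
        · intro k hk
          have := h k (by omega)
          rw [if_pos hk] at this; simpa using this
        · intro k hk
          have := h (i + k) (by omega)
          rw [if_neg (by omega)] at this
          simpa [Nat.add_sub_cancel_left] using this
    have e1 := prodAtomW0 hXmeas hXindep hXdist hW0indep {w} (measurableSet_singleton _)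
      (Finset.range (i + M)) (fun k => if k < i then u k else v (k - i))
    have e2 := prodAtomW0 hXmeas hXindep hXdist hW0indep {w} (measurableSet_singleton _)
      (Finset.range i) u
    have hp1 : ∏ k ∈ Finset.range i, ν {(fun k => if k < i then u k else v (k - i)) k}
        = ∏ k ∈ Finset.range i, ν {u k} :=
      Finset.prod_congr rfl fun k hk => by simp only [if_pos (Finset.mem_range.1 hk)]
    have hp2 : ∏ k ∈ Finset.range M, ν {(fun k => if k < i then u k else v (k - i)) (i + k)}
        = ∏ k ∈ Finset.range M, ν {v k} :=
      Finset.prod_congr rfl fun k hk => by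
        simp only [if_neg (by omega : ¬ i + k < i), Nat.add_sub_cancel_left]
    rw [Set.inter_assoc, hmerge, e1, hAt0, e2, Finset.prod_range_add, hp1, hp2, mul_assoc]
  have hmeas : ∀ p ∈ UU W0 S C i lam,
      MeasurableSet ((W0 ⁻¹' {p.1} ∩ At X 0 i p.2) ∩ At X i M v) :=
    fun p _ => ((hW0meas (measurableSet_singleton _)).inter
      (At_meas' hXmeas 0 i p.2)).inter (At_meas' hXmeas i M v)
  have hdisj : (UU W0 S C i lam).PairwiseDisjoint
      (fun p => (W0 ⁻¹' {p.1} ∩ At X 0 i p.2) ∩ At X i M v) :=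
    fun p hp q hq hne => ((UU_pairwise W0 S C i lam hp hq hne).mono
      Set.inter_subset_left Set.inter_subset_left)
  have hU : Fm X W0 S C i lam ∩ At X i M v
      = ⋃ p ∈ UU W0 S C i lam, ((W0 ⁻¹' {p.1} ∩ At X 0 i p.2) ∩ At X i M v) := by
    rw [Fm, Set.iUnion₂_inter]
  rw [hU, measure_biUnion (UU_countable hW0count S C i lam) hdisj hmeas]
  have hcong : ∀ p : ↥(UU W0 S C i lam),
      P ((W0 ⁻¹' {(p : α × (ℕ → α)).1} ∩ At X 0 i (p : α × (ℕ → α)).2) ∩ At X i M v)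
        = P (W0 ⁻¹' {(p : α × (ℕ → α)).1} ∩ At X 0 i (p : α × (ℕ → α)).2)
          * ∏ k ∈ Finset.range M, ν {v k} := fun p => key p.1 p.2
  rw [tsum_congr hcong, ENNReal.tsum_mul_right]
  congr 1
  rw [Fm, measure_biUnion (UU_countable hW0count S C i lam)
    (UU_pairwise W0 S C i lam)
    (fun p _ => (hW0meas (measurableSet_singleton _)).inter (At_meas' hXmeas 0 i p.2))]

/-! ### Factorization lemmas -/

section Main
variable (hXmeas : ∀ k, Measurable (X k))
    (hXindep : iIndepFun X P)
    (hXdist : ∀ k, Measure.map (X k) P = ν)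
    {W0 : Ω → α} (hW0meas : Measurable W0) (hW0count : (Set.range W0).Countable)
    (hW0indep : IndepFun W0 (fun ω k => X k ω) P)
    (S : Finset α) (C : Set α) (i : ℕ) (lam : α)

/-- `d`-prefixed vector -/
def cons (d : α) (v : ℕ → α) : ℕ → α := fun k => if k = 0 then d else v (k - 1)

lemma At_cons (d : α) (j M : ℕ) (v : ℕ → α) :
    {ω | X j ω = d} ∩ At X (j + 1) M v = At X j (M + 1) (cons d v) := by
  ext ω
  simp only [At, cons, Set.mem_inter_iff, Set.mem_setOf_eq]
  constructor
  · rintro ⟨h0, h1⟩ k hk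
    match k with
    | 0 => simpa using h0
    | (m + 1) =>
      simp only [if_neg (Nat.succ_ne_zero m), Nat.add_sub_cancel]
      have := h1 m (by omega)
      rwa [show j + 1 + m = j + (m + 1) by omega] at this
  · intro h
    constructor
    · have := h 0 (by omega)
      simpa using this
    · intro k hk
      have := h (k + 1) (by omega)
      simp only [if_neg (Nat.succ_ne_zero k), Nat.add_sub_cancel] at this
      rwa [show j + (k + 1) = j + 1 + k by omega] at this

lemma prod_cons (d : α) (M : ℕ) (v : ℕ → α) :
    ∏ k ∈ Finset.range (M + 1), ν {cons d v k} = ν {d} * ∏ k ∈ Finset.range M, ν {v k} := by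
  rw [Finset.prod_range_succ']
  simp only [cons, if_pos rfl, if_neg (Nat.succ_ne_zero _), Nat.add_sub_cancel, if_true, mul_comm]

lemma VV_pairwise_cons (d : α) (M : ℕ) (μ : α) (j : ℕ) :
    (VV S C M μ).PairwiseDisjoint (fun v => At X j (M + 1) (cons d v)) := by
  intro v hv w hw hne
  obtain ⟨k, hk⟩ := Function.ne_iff.1 hne
  by_cases hkM : k < M
  · refine Set.disjoint_left.2 fun ω h1 h2 => hk ?_
    have e1 := h1 (k + 1) (by omega)
    have e2 := h2 (k + 1) (by omega)
    rw [e1] at e2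
    simpa [cons, Nat.succ_ne_zero] using e2
  · exact absurd ((hv.1.2 k hkM).trans (hw.1.2 k hkM).symm) hk

lemma Xd_mT_eq (d : α) (j M : ℕ) (μ : α) :
    {ω | X j ω = d} ∩ mT X S C (j + 1) M μ
      = ⋃ v ∈ VV S C M μ, At X j (M + 1) (cons d v) := by
  rw [mT_eq_biUnion, Set.inter_iUnion₂]
  exact Set.iUnion₂_congr fun v hv => At_cons d j M v

include hXmeas hXindep hXdist hW0meas hW0count hW0indep in
lemma Fm_prob_mT (M : ℕ) (μ : α) :
    P (Fm X W0 S C i lam ∩ mT X S C i M μ)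
      = P (Fm X W0 S C i lam) * P (mT X S C i M μ) := by
  rw [mT_eq_biUnion, Set.inter_iUnion₂,
    measure_biUnion (VV_countable S C M μ)
      (fun v hv w hw hne => Disjoint.mono Set.inter_subset_right Set.inter_subset_right
        (VV_pairwise S C M μ i hv hw hne))
      (fun v _ => (Fm_meas hXmeas hW0meas hW0count S C i lam).inter (At_meas' hXmeas i M v))]
  have hcong : ∀ v : ↥(VV S C M μ),
      P (Fm X W0 S C i lam ∩ At X i M (v : ℕ → α))
        = P (Fm X W0 S C i lam) * ∏ k ∈ Finset.range M, ν {(v : ℕ → α) k} :=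
    fun v => Fm_prob_atom hXmeas hXindep hXdist hW0meas hW0count hW0indep S C i lam M v.1
  rw [tsum_congr hcong, ENNReal.tsum_mul_left, ← mT_eq_biUnion,
    mT_prob hXmeas hXindep hXdist S C i M μ]

include hXmeas hXindep hXdist hW0meas hW0count hW0indep in
lemma Fm_prob_Xd_mT (d : α) (M : ℕ) (μ : α) :
    P (Fm X W0 S C i lam ∩ ({ω | X i ω = d} ∩ mT X S C (i + 1) M μ))
      = P (Fm X W0 S C i lam) * (ν {d} * P (mT X S C (i + 1) M μ)) := by
  rw [Xd_mT_eq, Set.inter_iUnion₂,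
    measure_biUnion (VV_countable S C M μ)
      (fun v hv w hw hne => Disjoint.mono Set.inter_subset_right Set.inter_subset_right
        (VV_pairwise_cons S C d M μ i hv hw hne))
      (fun v _ => (Fm_meas hXmeas hW0meas hW0count S C i lam).inter
        (At_meas' hXmeas i (M + 1) (cons d v)))]
  have hcong : ∀ v : ↥(VV S C M μ),
      P (Fm X W0 S C i lam ∩ At X i (M + 1) (cons d (v : ℕ → α)))
        = (P (Fm X W0 S C i lam) * ν {d}) * ∏ k ∈ Finset.range M, ν {(v : ℕ → α) k} := by
    intro v
    rw [Fm_prob_atom hXmeas hXindep hXdist hW0meas hW0count hW0indep S C i lam (M + 1)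
      (cons d v.1), prod_cons, mul_assoc]
  rw [tsum_congr hcong, ENNReal.tsum_mul_left,
    mT_prob hXmeas hXindep hXdist S C (i + 1) M μ, mul_assoc]

include hXmeas hXindep hXdist hW0meas hW0count hW0indep in
lemma Fm_prob_mTi (μ : α) :
    P (Fm X W0 S C i lam ∩ mTi X S C i μ)
      = P (Fm X W0 S C i lam) * P (mTi X S C i μ) := by
  have hmeasT : ∀ M, MeasurableSet (mT (X := X) S C i M μ) := fun M => mT_meas hXmeas S C i M μ
  have h1 : Tendsto (fun M => P (Fm X W0 S C i lam ∩ mT X S C i M μ)) atTop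
      (𝓝 (P (Fm X W0 S C i lam ∩ mTi X S C i μ))) := by
    have : Fm X W0 S C i lam ∩ mTi X S C i μ
        = ⋂ M, (Fm X W0 S C i lam ∩ mT X S C i M μ) := by
      rw [mTi_eq_iInter, Set.inter_iInter]
    rw [this]
    exact tendsto_measure_iInter_atTop
      (fun M => ((Fm_meas hXmeas hW0meas hW0count S C i lam).inter
        (hmeasT M)).nullMeasurableSet)
      (fun M N hMN => Set.inter_subset_inter_right _ (mT_antitone S C i μ hMN))
      ⟨0, measure_ne_top _ _⟩
  have h2 : Tendsto (fun M => P (Fm X W0 S C i lam) * P (mT X S C i M μ)) atTop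
      (𝓝 (P (Fm X W0 S C i lam) * P (mTi X S C i μ))) :=
    ENNReal.Tendsto.const_mul (tendsto_mT hXmeas S C i μ) (Or.inr (measure_ne_top _ _))
  have he : (fun M => P (Fm X W0 S C i lam ∩ mT X S C i M μ))
      = fun M => P (Fm X W0 S C i lam) * P (mT X S C i M μ) := by
    funext M
    exact Fm_prob_mT hXmeas hXindep hXdist hW0meas hW0count hW0indep S C i lam M μ
  rw [he] at h1
  exact tendsto_nhds_unique h1 h2

include hXmeas hXindep hXdist hW0meas hW0count hW0indep in
lemma Fm_prob_Xd_mTi (d : α) (μ : α) :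
    P (Fm X W0 S C i lam ∩ ({ω | X i ω = d} ∩ mTi X S C (i + 1) μ))
      = P (Fm X W0 S C i lam) * (ν {d} * P (mTi X S C (i + 1) μ)) := by
  have hν : ν {d} ≠ ⊤ := by
    rw [← hXdist 0, Measure.map_apply (hXmeas 0) (measurableSet_singleton _)]
    exact measure_ne_top _ _
  have hmeasT : ∀ M, MeasurableSet (mT (X := X) S C (i + 1) M μ) :=
    fun M => mT_meas hXmeas S C (i + 1) M μ
  have h1 : Tendsto (fun M => P (Fm X W0 S C i lam ∩ ({ω | X i ω = d} ∩ mT X S C (i + 1) M μ)))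
      atTop (𝓝 (P (Fm X W0 S C i lam ∩ ({ω | X i ω = d} ∩ mTi X S C (i + 1) μ)))) := by
    have : Fm X W0 S C i lam ∩ ({ω | X i ω = d} ∩ mTi X S C (i + 1) μ)
        = ⋂ M, (Fm X W0 S C i lam ∩ ({ω | X i ω = d} ∩ mT X S C (i + 1) M μ)) := by
      rw [mTi_eq_iInter, Set.inter_iInter, Set.inter_iInter]
    rw [this]
    refine tendsto_measure_iInter_atTop
      (fun M => ((Fm_meas hXmeas hW0meas hW0count S C i lam).inter
        (((hXmeas i) (measurableSet_singleton d)).inter (hmeasT M))).nullMeasurableSet)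
      (fun M N hMN => Set.inter_subset_inter_right _
        (Set.inter_subset_inter_right _ (mT_antitone S C (i + 1) μ hMN)))
      ⟨0, measure_ne_top _ _⟩
  have h2 : Tendsto (fun M => P (Fm X W0 S C i lam) * (ν {d} * P (mT X S C (i + 1) M μ)))
      atTop (𝓝 (P (Fm X W0 S C i lam) * (ν {d} * P (mTi X S C (i + 1) μ)))) :=
    ENNReal.Tendsto.const_mul
      (ENNReal.Tendsto.const_mul (tendsto_mT hXmeas S C (i + 1) μ) (Or.inr hν))
      (Or.inr (measure_ne_top _ _))
  have he : (fun M => P (Fm X W0 S C i lam ∩ ({ω | X i ω = d} ∩ mT X S C (i + 1) M μ)))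
      = fun M => P (Fm X W0 S C i lam) * (ν {d} * P (mT X S C (i + 1) M μ)) := by
    funext M
    exact Fm_prob_Xd_mT hXmeas hXindep hXdist hW0meas hW0count hW0indep S C i lam d M μ
  rw [he] at h1
  exact tendsto_nhds_unique h1 h2

end Main
end Stmt4Proof

open Stmt4Proof


/-- for the walk `W(n) = W(0) + S(n)` with `W(0)` countably valued and
independent of the steps, for `λ, Λ ∈ C̄` with `Λ - λ ∈ S` and
`ℙ({W(i) = λ} ∩ {W(n) ∈ C̄ ∀ n ≥ 0}) > 0`, the conditional probability
`ℙ(W(i+1) = Λ | W(i) = λ, W ∈ C̄)` equals `ν({Λ-λ})·h(Λ)/h(λ)`, where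
`h(μ) = ℙ(μ + S(k) ∈ C̄ for all k ≥ 1)`. -/
theorem stmt_4
    (D : ℕ) (hD : 1 ≤ D)
    (S : Finset (Fin D → ℝ)) (hSne : S.Nonempty)
    (ν : Measure (Fin D → ℝ)) [IsProbabilityMeasure ν]
    (hνpos : ∀ s ∈ S, 0 < ν {s}) (hνS : ν (S : Set (Fin D → ℝ)) = 1)
    {Ω : Type*} [MeasurableSpace Ω] (P : Measure Ω) [IsProbabilityMeasure P]
    (X : ℕ → Ω → (Fin D → ℝ)) (hXmeas : ∀ k, Measurable (X k))
    (hXindep : iIndepFun X P)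
    (hXdist : ∀ k, Measure.map (X k) P = ν)
    (C : Set (Fin D → ℝ)) (hCadd : ∀ x ∈ C, ∀ y ∈ C, x + y ∈ C)
    (W0 : Ω → (Fin D → ℝ)) (hW0meas : Measurable W0)
    (hW0count : (Set.range W0).Countable)
    (hW0indep : IndepFun W0 (fun ω k => X k ω) P)
    (lam Lam : Fin D → ℝ) (hlam : lam ∈ C) (hLam : Lam ∈ C) (hstep : Lam - lam ∈ S)
    (i : ℕ)
    (hpos : 0 < P ({ω | W0 ω + (∑ k ∈ Finset.range i, X k ω) = lam}
        ∩ {ω | ∀ n, W0 ω + (∑ k ∈ Finset.range n, X k ω) ∈ C})) :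
    P ({ω | W0 ω + (∑ k ∈ Finset.range (i + 1), X k ω) = Lam}
        ∩ ({ω | W0 ω + (∑ k ∈ Finset.range i, X k ω) = lam}
          ∩ {ω | ∀ n, W0 ω + (∑ k ∈ Finset.range n, X k ω) ∈ C}))
      / P ({ω | W0 ω + (∑ k ∈ Finset.range i, X k ω) = lam}
          ∩ {ω | ∀ n, W0 ω + (∑ k ∈ Finset.range n, X k ω) ∈ C})
    = ν {Lam - lam}
        * P {ω | ∀ n, 1 ≤ n → Lam + (∑ k ∈ Finset.range n, X k ω) ∈ C}
        / P {ω | ∀ n, 1 ≤ n → lam + (∑ k ∈ Finset.range n, X k ω) ∈ C} := by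
  classical
  set d : Fin D → ℝ := Lam - lam with hd
  set Gd : Set Ω := {ω | ∀ k, X k ω ∈ (S : Set (Fin D → ℝ))} with hGddef
  -- Gd is conull
  have hXS : ∀ k, P (X k ⁻¹' (S : Set (Fin D → ℝ))) = 1 := by
    intro k
    rw [← Measure.map_apply (hXmeas k) S.measurableSet, hXdist k]
    exact hνS
  have hGdc : P Gdᶜ = 0 := by
    have hre : Gdᶜ = ⋃ k, (X k ⁻¹' (S : Set (Fin D → ℝ)))ᶜ := by
      ext ω
      simp [hGddef, not_forall]
    rw [hre]
    refine measure_iUnion_null fun k => ?_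
    rw [measure_compl ((hXmeas k) S.measurableSet) (measure_ne_top _ _), hXS k,
      measure_univ, tsub_self]
  -- set identity I1
  have hI1 : (({ω | W0 ω + (∑ k ∈ Finset.range i, X k ω) = lam}
        ∩ {ω | ∀ n, W0 ω + (∑ k ∈ Finset.range n, X k ω) ∈ C}) ∩ Gd)
      = (Fm X W0 S C i lam ∩ mTi X S C i lam) ∩ Gd := by
    rw [Fm_eq]
    ext ω
    simp only [Set.mem_inter_iff, Set.mem_setOf_eq, mTi, hGddef]
    constructor
    · rintro ⟨⟨hB, hG⟩, hGd⟩
      refine ⟨⟨⟨⟨hB, fun n hn => hG n⟩, fun k _ => hGd k⟩, fun k => hGd (i + k), ?_⟩, hGd⟩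
      intro m hm
      have := hG (i + m)
      rwa [Finset.sum_range_add, ← add_assoc, hB] at this
    · rintro ⟨⟨⟨⟨hB, hGle⟩, _⟩, _, hT⟩, hGd⟩
      refine ⟨⟨hB, fun n => ?_⟩, hGd⟩
      rcases le_or_gt n i with hn | hn
      · exact hGle n hn
      · obtain ⟨m, rfl, hm⟩ : ∃ m, n = i + m ∧ 1 ≤ m := ⟨n - i, by omega, by omega⟩
        have := hT m hm
        rwa [Finset.sum_range_add, ← add_assoc, hB]
  -- set identity I2
  have hI2 : (({ω | W0 ω + (∑ k ∈ Finset.range (i + 1), X k ω) = Lam}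
        ∩ ({ω | W0 ω + (∑ k ∈ Finset.range i, X k ω) = lam}
          ∩ {ω | ∀ n, W0 ω + (∑ k ∈ Finset.range n, X k ω) ∈ C})) ∩ Gd)
      = (Fm X W0 S C i lam ∩ ({ω | X i ω = d} ∩ mTi X S C (i + 1) Lam)) ∩ Gd := by
    rw [Fm_eq]
    ext ω
    simp only [Set.mem_inter_iff, Set.mem_setOf_eq, mTi, hGddef]
    constructor
    · rintro ⟨⟨hA, hB, hG⟩, hGd⟩
      have hXi : X i ω = d := by
        have h' : W0 ω + (∑ k ∈ Finset.range i, X k ω) + X i ω = Lam := by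
          rwa [Finset.sum_range_succ, ← add_assoc] at hA
        rw [hB] at h'
        rw [hd]
        exact eq_sub_of_add_eq' h'
      refine ⟨⟨⟨⟨hB, fun n hn => hG n⟩, fun k _ => hGd k⟩, hXi,
        fun k => hGd (i + 1 + k), ?_⟩, hGd⟩
      intro m hm
      have := hG (i + 1 + m)
      rwa [Finset.sum_range_add, ← add_assoc, hA] at this
    · rintro ⟨⟨⟨⟨hB, hGle⟩, _⟩, hXi, _, hT⟩, hGd⟩
      have hA : W0 ω + (∑ k ∈ Finset.range (i + 1), X k ω) = Lam := by
        rw [Finset.sum_range_succ, ← add_assoc, hB, hXi, hd]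
        abel
      refine ⟨⟨hA, hB, fun n => ?_⟩, hGd⟩
      rcases le_or_gt n i with hn | hn
      · exact hGle n hn
      · rcases eq_or_lt_of_le (by omega : i + 1 ≤ n) with hn1 | hn1
        · rw [← hn1, hA]; exact hLam
        · obtain ⟨m, rfl, hm⟩ : ∃ m, n = (i + 1) + m ∧ 1 ≤ m := ⟨n - (i + 1), by omega, by omega⟩
          have := hT m hm
          rwa [Finset.sum_range_add, ← add_assoc, hA]
  -- goal-side h sets
  have hgoalLam : {ω | ∀ n, 1 ≤ n → Lam + (∑ k ∈ Finset.range n, X k ω) ∈ C} ∩ Gd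
      = mTi X S C 0 Lam := by
    ext ω
    simp only [Set.mem_inter_iff, Set.mem_setOf_eq, mTi, hGddef, zero_add]
    tauto
  have hgoallam : {ω | ∀ n, 1 ≤ n → lam + (∑ k ∈ Finset.range n, X k ω) ∈ C} ∩ Gd
      = mTi X S C 0 lam := by
    ext ω
    simp only [Set.mem_inter_iff, Set.mem_setOf_eq, mTi, hGddef, zero_add]
    tauto
  -- probability computations
  have e1 : P ({ω | W0 ω + (∑ k ∈ Finset.range i, X k ω) = lam}
        ∩ {ω | ∀ n, W0 ω + (∑ k ∈ Finset.range n, X k ω) ∈ C})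
      = P (Fm X W0 S C i lam) * P (mTi X S C i lam) := by
    rw [← measure_inter_conull hGdc, hI1, measure_inter_conull hGdc,
      Fm_prob_mTi hXmeas hXindep hXdist hW0meas hW0count hW0indep S C i lam lam]
  have e2 : P ({ω | W0 ω + (∑ k ∈ Finset.range (i + 1), X k ω) = Lam}
        ∩ ({ω | W0 ω + (∑ k ∈ Finset.range i, X k ω) = lam}
          ∩ {ω | ∀ n, W0 ω + (∑ k ∈ Finset.range n, X k ω) ∈ C}))
      = P (Fm X W0 S C i lam) * (ν {d} * P (mTi X S C (i + 1) Lam)) := by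
    rw [← measure_inter_conull hGdc, hI2, measure_inter_conull hGdc,
      Fm_prob_Xd_mTi hXmeas hXindep hXdist hW0meas hW0count hW0indep S C i lam d Lam]
  have e3 : P {ω | ∀ n, 1 ≤ n → Lam + (∑ k ∈ Finset.range n, X k ω) ∈ C}
      = P (mTi X S C (i + 1) Lam) := by
    rw [← measure_inter_conull hGdc, hgoalLam,
      mTi_shift hXmeas hXindep hXdist S C 0 (i + 1) Lam]
  have e4 : P {ω | ∀ n, 1 ≤ n → lam + (∑ k ∈ Finset.range n, X k ω) ∈ C}
      = P (mTi X S C i lam) := by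
    rw [← measure_inter_conull hGdc, hgoallam,
      mTi_shift hXmeas hXindep hXdist S C 0 i lam]
  have hFm0 : P (Fm X W0 S C i lam) ≠ 0 := by
    intro h
    rw [e1, h, zero_mul] at hpos
    exact lt_irrefl 0 hpos
  rw [e1, e2, e3, e4, ENNReal.mul_div_mul_left _ _ hFm0 (measure_ne_top _ _)]
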